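/- Every configuration x on a torus with 0 < d₁(x) ≤ 1/2 that is not a perfect checkerboard pattern (i.e., not in C_e^1 ∪ C_o^1 with exactly half ones checkered) contains a 2×2 window with either exactly one 1, or with two adjacent 1s and two adjacent 0s. -/

import Mathlib

/-- Number of 1s in the 2×2 window at position `c`. -/
def wcount {n₁ n₂ : ℕ} (x : ZMod n₁ × ZMod n₂ → Bool) (c : ZMod n₁ × ZMod n₂) : ℕ :=
  (if x c then 1 else 0) + (if x (c + (1, 0)) then 1 else 0) +
    (if x (c + (0, 1)) then 1 else 0) + (if x (c + (1, 1)) then 1 else 0)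

/-- The 2×2 window at `c` is checkered: equal states on each diagonal,
different states on adjacent cells. -/
def Checkered {n₁ n₂ : ℕ} (x : ZMod n₁ × ZMod n₂ → Bool) (c : ZMod n₁ × ZMod n₂) : Prop :=
  x c = x (c + (1, 1)) ∧ x (c + (1, 0)) = x (c + (0, 1)) ∧ x c ≠ x (c + (1, 0))

section auxNCGW
variable {n₁ n₂ : ℕ}

lemma ncgw_wcount_eq_zero_iff (x : ZMod n₁ × ZMod n₂ → Bool) (c : ZMod n₁ × ZMod n₂) :
    wcount x c = 0 ↔ x c = false ∧ x (c + (1,0)) = false ∧ x (c + (0,1)) = false ∧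
      x (c + (1,1)) = false := by
  unfold wcount
  cases h1 : x c <;> cases h2 : x (c + (1,0)) <;> cases h3 : x (c + (0,1)) <;>
    cases h4 : x (c + (1,1)) <;> simp

lemma ncgw_prod_add1 (c : ZMod n₁ × ZMod n₂) : c + (1,0) + (0,1) = c + (1,1) := by
  rw [add_assoc]; norm_num [Prod.ext_iff]
lemma ncgw_prod_add3 (c : ZMod n₁ × ZMod n₂) : c + (1,0) + (1,1) = c + (2,1) := by
  rw [add_assoc]; norm_num [Prod.ext_iff]
lemma ncgw_prod_add4 (c : ZMod n₁ × ZMod n₂) : c + (0,1) + (1,0) = c + (1,1) := by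
  rw [add_assoc]; norm_num [Prod.ext_iff]
lemma ncgw_prod_add6 (c : ZMod n₁ × ZMod n₂) : c + (0,1) + (1,1) = c + (1,2) := by
  rw [add_assoc]; norm_num [Prod.ext_iff]

lemma ncgw_zero_step1 (x : ZMod n₁ × ZMod n₂ → Bool)
    (hne1 : ∀ c, wcount x c ≠ 1) (hch : ∀ c, wcount x c = 2 → Checkered x c)
    (c : ZMod n₁ × ZMod n₂) (h : wcount x c = 0) : wcount x (c + (1,0)) = 0 := by
  obtain ⟨h0, h10, h01, h11⟩ := (ncgw_wcount_eq_zero_iff x c).mp h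
  have hne := hne1 (c + (1,0))
  have hc2 := hch (c + (1,0))
  unfold wcount at hne hc2 ⊢
  unfold Checkered at hc2
  rw [ncgw_prod_add1, ncgw_prod_add3, show c + (1,0) + (1,0) = c + (2,0) from by
    rw [add_assoc]; norm_num [Prod.ext_iff]] at hne hc2 ⊢
  rw [h10, h11] at hne hc2 ⊢
  cases h20 : x (c + (2,0)) <;> cases h21 : x (c + (2,1)) <;> simp_all

lemma ncgw_zero_step2 (x : ZMod n₁ × ZMod n₂ → Bool)
    (hne1 : ∀ c, wcount x c ≠ 1) (hch : ∀ c, wcount x c = 2 → Checkered x c)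
    (c : ZMod n₁ × ZMod n₂) (h : wcount x c = 0) : wcount x (c + (0,1)) = 0 := by
  obtain ⟨h0, h10, h01, h11⟩ := (ncgw_wcount_eq_zero_iff x c).mp h
  have hne := hne1 (c + (0,1))
  have hc2 := hch (c + (0,1))
  unfold wcount at hne hc2 ⊢
  unfold Checkered at hc2
  rw [ncgw_prod_add4, ncgw_prod_add6, show c + (0,1) + (0,1) = c + (0,2) from by
    rw [add_assoc]; norm_num [Prod.ext_iff]] at hne hc2 ⊢
  rw [h01, h11] at hne hc2 ⊢
  cases h02 : x (c + (0,2)) <;> cases h12 : x (c + (1,2)) <;> simp_all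

lemma ncgw_shift_cast1 (c : ZMod n₁ × ZMod n₂) (k l : ℕ) :
    c + ((↑(k+1) : ZMod n₁), (↑l : ZMod n₂)) = c + ((↑k : ZMod n₁), (↑l : ZMod n₂)) + (1, 0) := by
  rw [add_assoc]; push_cast; norm_num [Prod.ext_iff]

lemma ncgw_shift_cast2 (c : ZMod n₁ × ZMod n₂) (k l : ℕ) :
    c + ((↑k : ZMod n₁), (↑(l+1) : ZMod n₂)) = c + ((↑k : ZMod n₁), (↑l : ZMod n₂)) + (0, 1) := by
  rw [add_assoc]; push_cast; norm_num [Prod.ext_iff]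

lemma ncgw_self_decomp [NeZero n₁] [NeZero n₂] (c c0 : ZMod n₁ × ZMod n₂) :
    c = c0 + ((↑((c.1 - c0.1).val) : ZMod n₁), (↑((c.2 - c0.2).val) : ZMod n₂)) := by
  have e1 : ((c.1 - c0.1).val : ZMod n₁) = c.1 - c0.1 := ZMod.natCast_rightInverse _
  have e2 : ((c.2 - c0.2).val : ZMod n₂) = c.2 - c0.2 := ZMod.natCast_rightInverse _
  rw [e1, e2]; ext <;> simp

lemma ncgw_sum_shift (x : ZMod n₁ × ZMod n₂ → Bool) [NeZero n₁] [NeZero n₂]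
    (v : ZMod n₁ × ZMod n₂) :
    ∑ c : ZMod n₁ × ZMod n₂, (if x (c + v) then 1 else 0) =
      (Finset.univ.filter (fun c : ZMod n₁ × ZMod n₂ => x c = true)).card := by
  rw [Finset.card_filter]
  exact Fintype.sum_equiv (Equiv.addRight v) _ _ (by intro c; simp; congr)

lemma ncgw_sum_wcount [NeZero n₁] [NeZero n₂] (x : ZMod n₁ × ZMod n₂ → Bool) :
    ∑ c : ZMod n₁ × ZMod n₂, wcount x c =
      4 * (Finset.univ.filter (fun c : ZMod n₁ × ZMod n₂ => x c = true)).card := by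
  unfold wcount
  rw [Finset.sum_add_distrib, Finset.sum_add_distrib, Finset.sum_add_distrib]
  have h0 : ∑ c : ZMod n₁ × ZMod n₂, (if x c then 1 else 0) =
      (Finset.univ.filter (fun c : ZMod n₁ × ZMod n₂ => x c = true)).card := by
    rw [Finset.card_filter]
  rw [h0, ncgw_sum_shift, ncgw_sum_shift, ncgw_sum_shift]
  ring

end auxNCGW

/-- on an even-sized torus, any configuration with at least one 1,
density of 1s at most 1/2, and which is not a sub-checkerboard (neither in
`C_e^1` nor in `C_o^1`) contains a 2×2 window with exactly one 1, or with two
adjacent 1s and two adjacent 0s (two 1s not placed diagonally). -/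
theorem non_checkerboard_gives_good_window
    (n₁ n₂ : ℕ) [NeZero n₁] [NeZero n₂] (h₁ : Even n₁) (h₂ : Even n₂)
    (x : ZMod n₁ × ZMod n₂ → Bool)
    (hone : ∃ c : ZMod n₁ × ZMod n₂, x c = true)
    (hd : 2 * (Finset.univ.filter (fun c : ZMod n₁ × ZMod n₂ => x c = true)).card ≤ n₁ * n₂)
    (hne : ¬(∀ c : ZMod n₁ × ZMod n₂, x c = true → Even (c.1.val + c.2.val)))
    (hno : ¬(∀ c : ZMod n₁ × ZMod n₂, x c = true → ¬Even (c.1.val + c.2.val))) :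
    ∃ c : ZMod n₁ × ZMod n₂,
      wcount x c = 1 ∨ (wcount x c = 2 ∧ ¬Checkered x c) := by
  by_contra hcon
  push_neg at hcon
  have hne1 : ∀ c, wcount x c ≠ 1 := fun c => (hcon c).1
  have hch : ∀ c, wcount x c = 2 → Checkered x c := fun c => (hcon c).2
  by_cases hz : ∃ c0, wcount x c0 = 0
  · -- a 0-window spreads everywhere, contradicting the existence of a 1
    obtain ⟨c0, hc0⟩ := hz
    have hkl : ∀ l k : ℕ, wcount x (c0 + ((k : ZMod n₁), (l : ZMod n₂))) = 0 := by
      intro l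
      induction l with
      | zero =>
        intro k
        induction k with
        | zero => simpa [Prod.mk_zero_zero] using hc0
        | succ k ih =>
          rw [ncgw_shift_cast1]
          exact ncgw_zero_step1 x hne1 hch _ ih
      | succ l ih =>
        intro k
        rw [ncgw_shift_cast2]
        exact ncgw_zero_step2 x hne1 hch _ (ih k)
    obtain ⟨c, hc⟩ := hone
    have h0 := hkl ((c.2 - c0.2).val) ((c.1 - c0.1).val)
    rw [← ncgw_self_decomp c c0] at h0
    have := ((ncgw_wcount_eq_zero_iff x c).mp h0).1
    rw [hc] at this
    exact absurd this (by simp)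
  · -- every window has at least 2 ones; density forces all windows checkered
    push_neg at hz
    have h2 : ∀ c, 2 ≤ wcount x c := by
      intro c
      have ha := hne1 c
      have hb := hz c
      omega
    have hsum := ncgw_sum_wcount x
    have hN : (Finset.univ : Finset (ZMod n₁ × ZMod n₂)).card = n₁ * n₂ := by
      simp [Finset.card_univ, ZMod.card]
    have hpos : 1 ≤ n₁ * n₂ :=
      Nat.one_le_iff_ne_zero.mpr (Nat.mul_ne_zero (NeZero.ne n₁) (NeZero.ne n₂))
    have hall2 : ∀ c, wcount x c = 2 := by
      intro c0
      by_contra hne2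
      have h3 : 3 ≤ wcount x c0 := by have := h2 c0; omega
      have hbig : 2 * (n₁ * n₂) + 1 ≤ ∑ c : ZMod n₁ × ZMod n₂, wcount x c := by
        have hsplit := Finset.add_sum_erase Finset.univ (wcount x) (Finset.mem_univ c0)
        have hrest := Finset.card_nsmul_le_sum (Finset.univ.erase c0) (wcount x) 2
          (fun c _ => h2 c)
        rw [smul_eq_mul] at hrest
        have hrest' : (Finset.univ.erase c0).card * 2 ≤
            ∑ c ∈ Finset.univ.erase c0, wcount x c := hrest
        have hcard : (Finset.univ.erase c0).card = n₁ * n₂ - 1 := by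
          rw [Finset.card_erase_of_mem (Finset.mem_univ c0), hN]
        omega
      have hlow : ∑ c : ZMod n₁ × ZMod n₂, wcount x c ≤ 2 * (n₁ * n₂) := by omega
      omega
    have hflip1 : ∀ c, x (c + (1,0)) = ! x c := by
      intro c
      obtain ⟨-, -, hd'⟩ := hch c (hall2 c)
      cases ha : x c <;> cases hb : x (c + (1,0)) <;> simp_all
    have hflip2 : ∀ c, x (c + (0,1)) = ! x c := by
      intro c
      obtain ⟨-, hadj, hd'⟩ := hch c (hall2 c)
      rw [← hadj]
      cases ha : x c <;> cases hb : x (c + (1,0)) <;> simp_all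
    -- parity structure
    have hpar : ∀ l k : ℕ, x ((k : ZMod n₁), (l : ZMod n₂)) =
        xor (decide ((k + l) % 2 = 1)) (x 0) := by
      intro l
      induction l with
      | zero =>
        intro k
        induction k with
        | zero => simp [Prod.mk_zero_zero]
        | succ k ih =>
          have e : ((↑(k+1) : ZMod n₁), ((0:ℕ) : ZMod n₂)) =
              ((↑k : ZMod n₁), ((0:ℕ) : ZMod n₂)) + (1, 0) := by
            norm_num [Prod.ext_iff]
          rw [e, hflip1, ih]
          rcases Nat.mod_two_eq_zero_or_one k with h | h
          · simp [h, show (k + 0) % 2 = 0 from by omega,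
              show (k + 1 + 0) % 2 = 1 from by omega]
          · simp [h, show (k + 0) % 2 = 1 from by omega,
              show (k + 1 + 0) % 2 = 0 from by omega]
      | succ l ih =>
        intro k
        have e : ((↑k : ZMod n₁), (↑(l+1) : ZMod n₂)) =
            ((↑k : ZMod n₁), (↑l : ZMod n₂)) + (0, 1) := by
          norm_num [Prod.ext_iff]
        rw [e, hflip2, ih]
        rcases Nat.mod_two_eq_zero_or_one (k + l) with h | h
        · simp [h, show (k + (l + 1)) % 2 = 1 from by omega]
        · simp [h, show (k + (l + 1)) % 2 = 0 from by omega]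
    have hparc : ∀ c : ZMod n₁ × ZMod n₂,
        x c = xor (decide ((c.1.val + c.2.val) % 2 = 1)) (x 0) := by
      intro c
      have := hpar c.2.val c.1.val
      rwa [show ((c.1.val : ZMod n₁), (c.2.val : ZMod n₂)) = c from by
        ext <;> simp [ZMod.natCast_rightInverse _]] at this
    cases hb : x (0 : ZMod n₁ × ZMod n₂) with
    | true =>
      apply hne
      intro c hc
      have := hparc c
      rw [hc, hb] at this
      rw [Nat.even_iff]
      cases hp : decide ((c.1.val + c.2.val) % 2 = 1) with
      | true => rw [hp] at this; simp at this
      | false => simp at hp; omega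
    | false =>
      apply hno
      intro c hc
      have := hparc c
      rw [hc, hb] at this
      rw [Nat.even_iff]
      cases hp : decide ((c.1.val + c.2.val) % 2 = 1) with
      | true => simp at hp; omega
      | false => rw [hp] at this; simp at this
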